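/- Let θ > 0, let (θ_i)_{i≥1} be a non-negative real sequence with θ_* := sup_i θ_i < ∞ and θ*' := max(θ, θ_*), and for m ∈ ℕ set δ(m,θ) := sup_{j≥0} | (1/m)·∑_{i=1}^m θ_{jm+i} − θ |. Let T be a ℤ₊-valued random variable, let k ∈ ℕ, and let 0 ≤ l < n and m ≥ 1. Then |∑_{i=l+1}^n (θ_i − θ)·P[T+i = k]| ≤ δ(m,θ) + m·(2θ*' + (1/6)·θ_*·m)·d_TV(L(T), L(T+1)). -/

import Mathlib

open MeasureTheory ProbabilityTheory Finset

/-- Total variation distance between two measures. -/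
noncomputable def dTV {α : Type*} [MeasurableSpace α] (μ ν : Measure α) : ℝ :=
  ⨆ s : {s : Set α // MeasurableSet s}, |(μ s.1).toReal - (ν s.1).toReal|


private lemma tele (p : ℕ → ℝ) (a : ℕ) : ∀ c, |p (a+c) - p a| ≤ ∑ t ∈ Ico a (a+c), |p (t+1) - p t| := by
  intro c
  induction c with
  | zero => simp
  | succ c ih =>
    rw [show a+(c+1) = (a+c)+1 from rfl, Finset.sum_Ico_succ_top (Nat.le_add_right a c)]
    have h := abs_sub_le (p (a+c+1)) (p (a+c)) (p a)
    have h2 : |p (a+c+1) - p (a+c)| = |p ((a+c)+1) - p (a+c)| := rfl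
    linarith

private lemma tele' (p : ℕ → ℝ) (a b : ℕ) (hab : a ≤ b) :
    |p b - p a| ≤ ∑ t ∈ Ico a b, |p (t+1) - p t| := by
  obtain ⟨c, rfl⟩ := Nat.exists_eq_add_of_le hab
  exact tele p a c

private lemma dsum (f : ℕ → ℝ) (m a : ℕ) : ∀ c, ∑ j ∈ Icc a (a+c), ∑ i ∈ Ioc (j*m) (j*m+m), f i
    = ∑ i ∈ Ioc (a*m) ((a+c)*m+m), f i := by
  intro c
  induction c with
  | zero => simp
  | succ c ih =>
    rw [show a+(c+1) = (a+c)+1 from rfl, Finset.sum_Icc_succ_top (by omega), ih]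
    have h1 : (a+c)*m+m = ((a+c)+1)*m := by ring
    rw [h1]
    exact Finset.sum_Ioc_consecutive f (by nlinarith) (by omega)

private lemma block_bound (p q : ℕ → ℝ) (θs : ℝ) (s m : ℕ) (hm : 1 ≤ m)
    (hq0 : ∑ i ∈ Ioc s (s+m), q i = 0) (hqb : ∀ i ∈ Ioc s (s+m), |q i| ≤ θs) :
    |∑ i ∈ Ioc s (s+m), q i * p i| ≤
      θs * m * (∑ t ∈ Ioc s (s+m), |p (t+1) - p t|) / 2 := by
  have hB : (Ioc s (s+m)).Nonempty := ⟨s+1, by simp [mem_Ioc]; omega⟩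
  have hθs0 : 0 ≤ θs := le_trans (abs_nonneg _) (hqb _ hB.choose_spec)
  set M := (Ioc s (s+m)).sup' hB p with hM
  set L := (Ioc s (s+m)).inf' hB p with hL
  set V := ∑ t ∈ Ioc s (s+m), |p (t+1) - p t| with hV
  have hV0 : 0 ≤ V := Finset.sum_nonneg fun t _ => abs_nonneg _
  have hML : M - L ≤ V := by
    obtain ⟨b, hb, hMb⟩ := Finset.exists_mem_eq_sup' hB p
    obtain ⟨a, ha, hLa⟩ := Finset.exists_mem_eq_inf' hB p
    have haM : s < a ∧ a ≤ s + m := by simpa [mem_Ioc] using ha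
    have hbM : s < b ∧ b ≤ s + m := by simpa [mem_Ioc] using hb
    have key : ∀ x y : ℕ, s < x → x ≤ s+m → s < y → y ≤ s+m → x ≤ y →
        |p y - p x| ≤ V := by
      intro x y h1 h2 h3 h4 h5
      calc |p y - p x|
          ≤ ∑ t ∈ Ico x y, |p (t+1) - p t| := tele' p x y h5
        _ ≤ V := Finset.sum_le_sum_of_subset_of_nonneg
            (by intro t ht; simp only [mem_Ico] at ht; simp only [mem_Ioc]; omega)
            (fun t _ _ => abs_nonneg _)
    rw [hM, hL, hMb, hLa]
    rcases le_total a b with h | h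
    · have := key a b haM.1 haM.2 hbM.1 hbM.2 h
      have := le_abs_self (p b - p a)
      linarith
    · have := key b a hbM.1 hbM.2 haM.1 haM.2 h
      rw [abs_sub_comm] at this
      have := le_abs_self (p b - p a)
      linarith
  have hcenter : ∑ i ∈ Ioc s (s+m), q i * p i
      = ∑ i ∈ Ioc s (s+m), q i * (p i - (M+L)/2) := by
    simp only [mul_sub]
    rw [Finset.sum_sub_distrib, ← Finset.sum_mul, hq0]; ring
  rw [hcenter]
  calc |∑ i ∈ Ioc s (s+m), q i * (p i - (M+L)/2)|
      ≤ ∑ i ∈ Ioc s (s+m), |q i * (p i - (M+L)/2)| := Finset.abs_sum_le_sum_abs _ _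
    _ ≤ ∑ i ∈ Ioc s (s+m), θs * ((M-L)/2) := by
        apply Finset.sum_le_sum
        intro i hi
        rw [abs_mul]
        apply mul_le_mul (hqb i hi) _ (abs_nonneg _) hθs0
        have h1 : p i ≤ M := Finset.le_sup' p hi
        have h2 : L ≤ p i := Finset.inf'_le p hi
        rw [abs_le]; constructor <;> [linarith; linarith]
    _ = m * (θs * ((M-L)/2)) := by
        rw [Finset.sum_const, Nat.card_Ioc, Nat.add_sub_cancel_left, nsmul_eq_mul]
    _ ≤ θs * m * V / 2 := by
        have hm' : (1:ℝ) ≤ (m:ℝ) := by exact_mod_cast hm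
        have h0 : 0 ≤ θs * m * (V - (M-L)) :=
          mul_nonneg (mul_nonneg hθs0 (by linarith)) (by linarith)
        linarith

private lemma main_real (p θi : ℕ → ℝ) (θ θs θM δ d : ℝ) (m l n : ℕ)
    (hm : 1 ≤ m) (hln : l < n)
    (hθsM : θs ≤ θM) (hθs0 : 0 ≤ θs)
    (hp0 : ∀ i, 0 ≤ p i) (hpd : ∀ i, p i ≤ d)
    (hp1 : ∀ S : Finset ℕ, ∑ i ∈ S, p i ≤ 1)
    (hvar : ∀ S : Finset ℕ, ∑ i ∈ S, |p (i+1) - p i| ≤ 2*d)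
    (hθ0 : ∀ i, 0 ≤ θi i) (hθs : ∀ i, 1 ≤ i → θi i ≤ θs)
    (hδ : ∀ j : ℕ, |(1/(m:ℝ)) * ∑ t ∈ Icc 1 m, θi (j*m+t) - θ| ≤ δ)
    (hδ0 : 0 ≤ δ) (hd0 : 0 ≤ d) :
    |∑ i ∈ Icc (l+1) n, (θi i - θ) * p i| ≤ δ + (m:ℝ)*(2*θM + 1/6*θs*(m:ℝ))*d := by
  have hm' : (1:ℝ) ≤ (m:ℝ) := by exact_mod_cast hm
  have hmpos : (0:ℝ) < (m:ℝ) := by linarith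
  set θbar : ℕ → ℝ := fun j => (1/(m:ℝ)) * ∑ t ∈ Icc 1 m, θi (j*m+t) with hθbar
  set θb : ℕ → ℝ := fun i => θbar ((i-1)/m) with hθbdef
  have hθbar0 : ∀ j, 0 ≤ θbar j := by
    intro j
    apply mul_nonneg (by positivity)
    exact Finset.sum_nonneg fun t _ => hθ0 _
  have hθbars : ∀ j, θbar j ≤ θs := by
    intro j
    have h1 : ∑ t ∈ Icc 1 m, θi (j*m+t) ≤ ∑ t ∈ Icc 1 m, θs := by
      apply Finset.sum_le_sum
      intro t ht
      exact hθs _ (by simp [mem_Icc] at ht; omega)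
    have h2 : ∑ t ∈ Icc 1 m, θs = m * θs := by
      rw [Finset.sum_const, Nat.card_Icc]; simp [nsmul_eq_mul]
    rw [hθbar]
    calc (1/(m:ℝ)) * ∑ t ∈ Icc 1 m, θi (j*m+t) ≤ (1/(m:ℝ)) * (m*θs) := by
          apply mul_le_mul_of_nonneg_left _ (by positivity)
          rw [← h2]; exact h1
      _ = θs := by field_simp
  have hcent : ∀ i, 1 ≤ i → |θi i - θb i| ≤ θs := by
    intro i hi
    have h1 := hθ0 i
    have h2 := hθs i hi
    have h3 := hθbar0 ((i-1)/m)
    have h4 := hθbars ((i-1)/m)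
    rw [abs_le]; constructor <;> [simp only [hθbdef]; simp only [hθbdef]] <;> linarith
  -- reindexing within a block
  have hreix : ∀ (f : ℕ → ℝ) (j : ℕ),
      ∑ i ∈ Ioc (j*m) (j*m+m), f i = ∑ t ∈ Icc 1 m, f (j*m+t) := by
    intro f j
    rw [← Finset.Icc_add_one_left_eq_Ioc, ← Finset.map_add_left_Icc,
      Finset.sum_map]
    rfl
  -- the centered block sum vanishes
  have hq0 : ∀ j : ℕ, ∑ i ∈ Ioc (j*m) (j*m+m), (θi i - θb i) = 0 := by
    intro j
    have hθbj : ∀ i ∈ Ioc (j*m) (j*m+m), θb i = θbar j := by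
      intro i hi
      simp only [mem_Ioc] at hi
      have : (i-1)/m = j :=
        Nat.div_eq_of_lt_le (by omega) (by rw [add_mul, one_mul]; omega)
      simp only [hθbdef, this]
    rw [Finset.sum_sub_distrib, hreix θi j, Finset.sum_congr rfl hθbj, Finset.sum_const,
      Nat.card_Ioc, Nat.add_sub_cancel_left, nsmul_eq_mul, hθbar]
    field_simp
    ring
  have hblock : ∀ j : ℕ, |∑ i ∈ Ioc (j*m) (j*m+m), (θi i - θb i) * p i| ≤
      θs * m * (∑ t ∈ Ioc (j*m) (j*m+m), |p (t+1) - p t|) / 2 := by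
    intro j
    apply block_bound p _ θs (j*m) m hm (hq0 j)
    intro i hi
    simp only [mem_Ioc] at hi
    exact hcent i (by omega)
  -- split the sum
  have hsplit : ∑ i ∈ Icc (l+1) n, (θi i - θ) * p i
      = (∑ i ∈ Icc (l+1) n, (θb i - θ) * p i)
        + ∑ i ∈ Icc (l+1) n, (θi i - θb i) * p i := by
    rw [← Finset.sum_add_distrib]
    exact Finset.sum_congr rfl fun i _ => by ring
  rw [hsplit]
  -- Term 1
  have hT1 : |∑ i ∈ Icc (l+1) n, (θb i - θ) * p i| ≤ δ := by
    calc |∑ i ∈ Icc (l+1) n, (θb i - θ) * p i|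
        ≤ ∑ i ∈ Icc (l+1) n, |(θb i - θ) * p i| := Finset.abs_sum_le_sum_abs _ _
      _ ≤ ∑ i ∈ Icc (l+1) n, δ * p i := by
          apply Finset.sum_le_sum
          intro i _
          rw [abs_mul, abs_of_nonneg (hp0 i)]
          exact mul_le_mul_of_nonneg_right (hδ ((i-1)/m)) (hp0 i)
      _ = δ * ∑ i ∈ Icc (l+1) n, p i := by rw [Finset.mul_sum]
      _ ≤ δ * 1 := mul_le_mul_of_nonneg_left (hp1 _) hδ0
      _ = δ := mul_one δ
  -- Term 2
  have hT2 : |∑ i ∈ Icc (l+1) n, (θi i - θb i) * p i| ≤ (3*(m:ℝ)-2)*θs*d := by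
    have hmpos' : 0 < m := hm
    have hA1 : l / m * m ≤ l := Nat.div_mul_le_self l m
    have hA2 : l < l / m * m + m := by
      have h := Nat.div_add_mod l m
      have h2 : l % m < m := Nat.mod_lt _ hmpos'
      calc l = m * (l/m) + l % m := h.symm
        _ < m * (l/m) + m := by omega
        _ = l/m*m + m := by rw [Nat.mul_comm]
    have hB1 : (n-1) / m * m ≤ n-1 := Nat.div_mul_le_self (n-1) m
    have hB2 : n-1 < (n-1) / m * m + m := by
      have h := Nat.div_add_mod (n-1) m
      have h2 : (n-1) % m < m := Nat.mod_lt _ hmpos'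
      calc n-1 = m * ((n-1)/m) + (n-1) % m := h.symm
        _ < m * ((n-1)/m) + m := by omega
        _ = (n-1)/m*m + m := by rw [Nat.mul_comm]
    have hj01 : l / m ≤ (n-1) / m := Nat.div_le_div_right (by omega)
    obtain ⟨c, hc⟩ : ∃ c, (n-1)/m = l/m + c := ⟨(n-1)/m - l/m, by omega⟩
    set j0 := l / m with hj0
    set A := j0 * m with hAdef
    set B := (j0 + c) * m with hBdef
    rw [hc] at hB1 hB2
    have hAB : A ≤ B := Nat.mul_le_mul_right m (by omega)
    have hsub : Icc (l+1) n ⊆ Ioc A (B+m) := by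
      intro i hi
      simp only [mem_Icc] at hi
      simp only [mem_Ioc]
      omega
    have hsd := Finset.sum_sdiff (f := fun i => (θi i - θb i) * p i) hsub
    have hcard : (Ioc A (B+m) \ Icc (l+1) n).card ≤ 2*m - 2 := by
      have h1 : (Ioc A (B+m) \ Icc (l+1) n).card
          = (Ioc A (B+m)).card - (Icc (l+1) n).card := Finset.card_sdiff_of_subset hsub
      rw [h1, Nat.card_Ioc, Nat.card_Icc]
      omega
    have hE : |∑ i ∈ Ioc A (B+m) \ Icc (l+1) n, (θi i - θb i) * p i|
        ≤ (2*(m:ℝ)-2) * (θs*d) := by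
      calc |∑ i ∈ Ioc A (B+m) \ Icc (l+1) n, (θi i - θb i) * p i|
          ≤ ∑ i ∈ Ioc A (B+m) \ Icc (l+1) n, |(θi i - θb i) * p i| :=
            Finset.abs_sum_le_sum_abs _ _
        _ ≤ ∑ _i ∈ Ioc A (B+m) \ Icc (l+1) n, θs * d := by
            apply Finset.sum_le_sum
            intro i hi
            have hi1 : 1 ≤ i := by
              have := Finset.mem_sdiff.mp hi
              have := this.1
              simp only [mem_Ioc] at this
              omega
            rw [abs_mul, abs_of_nonneg (hp0 i)]
            exact mul_le_mul (hcent i hi1) (hpd i) (hp0 i) hθs0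
        _ = ((Ioc A (B+m) \ Icc (l+1) n).card : ℝ) * (θs * d) := by
            rw [Finset.sum_const, nsmul_eq_mul]
        _ ≤ (2*(m:ℝ)-2) * (θs*d) := by
            apply mul_le_mul_of_nonneg_right _ (mul_nonneg hθs0 hd0)
            have h2 : ((Ioc A (B+m) \ Icc (l+1) n).card : ℝ) ≤ ((2*m-2 : ℕ) : ℝ) := by
              exact_mod_cast hcard
            calc ((Ioc A (B+m) \ Icc (l+1) n).card : ℝ) ≤ ((2*m-2 : ℕ) : ℝ) := h2
              _ = 2*(m:ℝ)-2 := by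
                  have h3 : 2 ≤ 2*m := by omega
                  push_cast [Nat.cast_sub h3]
                  ring
    have hIext : |∑ i ∈ Ioc A (B+m), (θi i - θb i) * p i| ≤ θs * m * d := by
      have hds := dsum (fun i => (θi i - θb i) * p i) m j0 c
      have hdsV := dsum (fun t => |p (t+1) - p t|) m j0 c
      rw [hAdef, hBdef, ← hds]
      calc |∑ j ∈ Icc j0 (j0+c), ∑ i ∈ Ioc (j*m) (j*m+m), (θi i - θb i) * p i|
          ≤ ∑ j ∈ Icc j0 (j0+c), |∑ i ∈ Ioc (j*m) (j*m+m), (θi i - θb i) * p i| :=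
            Finset.abs_sum_le_sum_abs _ _
        _ ≤ ∑ j ∈ Icc j0 (j0+c),
              θs * m * (∑ t ∈ Ioc (j*m) (j*m+m), |p (t+1) - p t|) / 2 :=
            Finset.sum_le_sum fun j _ => hblock j
        _ = θs * m * (∑ j ∈ Icc j0 (j0+c), ∑ t ∈ Ioc (j*m) (j*m+m), |p (t+1) - p t|) / 2 := by
            rw [Finset.mul_sum, Finset.sum_div]
        _ ≤ θs * m * (2*d) / 2 := by
            have hV2 : ∑ j ∈ Icc j0 (j0+c), ∑ t ∈ Ioc (j*m) (j*m+m), |p (t+1) - p t| ≤ 2*d := by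
              rw [hdsV]; exact hvar _
            have h0 : (0:ℝ) ≤ θs * m := mul_nonneg hθs0 (by linarith)
            have := mul_le_mul_of_nonneg_left hV2 h0
            linarith
        _ = θs * m * d := by ring
    have heq : ∑ i ∈ Icc (l+1) n, (θi i - θb i) * p i
        = ∑ i ∈ Ioc A (B+m), (θi i - θb i) * p i
          - ∑ i ∈ Ioc A (B+m) \ Icc (l+1) n, (θi i - θb i) * p i := by
      rw [← hsd]; ring
    rw [heq]
    calc |∑ i ∈ Ioc A (B+m), (θi i - θb i) * p i
          - ∑ i ∈ Ioc A (B+m) \ Icc (l+1) n, (θi i - θb i) * p i|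
        ≤ |∑ i ∈ Ioc A (B+m), (θi i - θb i) * p i|
          + |∑ i ∈ Ioc A (B+m) \ Icc (l+1) n, (θi i - θb i) * p i| := abs_sub _ _
      _ ≤ θs * m * d + (2*(m:ℝ)-2) * (θs*d) := add_le_add hIext hE
      _ = (3*(m:ℝ)-2)*θs*d := by ring
  calc |∑ i ∈ Icc (l+1) n, (θb i - θ) * p i + ∑ i ∈ Icc (l+1) n, (θi i - θb i) * p i|
      ≤ |∑ i ∈ Icc (l+1) n, (θb i - θ) * p i|
        + |∑ i ∈ Icc (l+1) n, (θi i - θb i) * p i| := abs_add_le _ _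
    _ ≤ δ + (3*(m:ℝ)-2)*θs*d := add_le_add hT1 hT2
    _ ≤ δ + (m:ℝ)*(2*θM + 1/6*θs*(m:ℝ))*d := by
        have h1 : 0 ≤ θs*d*((m:ℝ)-3)^2 := by positivity
        have h2 : 0 ≤ (m:ℝ)*d*(θM - θs) :=
          mul_nonneg (mul_nonneg (by linarith) hd0) (by linarith)
        have h3 : 0 ≤ θs*d := mul_nonneg hθs0 hd0
        nlinarith


private lemma finset_meas (ρ : Measure ℕ) [IsFiniteMeasure ρ] (F : Finset ℕ) :
    ∑ a ∈ F, (ρ {a}).toReal = (ρ ↑F).toReal := by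
  induction F using Finset.induction with
  | empty => simp
  | @insert a F ha ih =>
    rw [Finset.sum_insert ha, ih, Finset.coe_insert,
      show (insert a ↑F : Set ℕ) = {a} ∪ ↑F from rfl,
      measure_union (by simpa using ha) .of_discrete,
      ENNReal.toReal_add (measure_ne_top _ _) (measure_ne_top _ _)]

private lemma tv_claim (μ ν : Measure ℕ) [IsFiniteMeasure μ] [IsFiniteMeasure ν] (d : ℝ)
    (hled : ∀ s : Set ℕ, |(μ s).toReal - (ν s).toReal| ≤ d) (A : Finset ℕ) :
    ∑ a ∈ A, |(μ {a}).toReal - (ν {a}).toReal| ≤ 2*d := by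
  rw [← Finset.sum_filter_add_sum_filter_not A (fun a => (ν {a}).toReal ≤ (μ {a}).toReal)]
  have h1 : ∑ a ∈ A.filter (fun a => (ν {a}).toReal ≤ (μ {a}).toReal),
      |(μ {a}).toReal - (ν {a}).toReal| ≤ d := by
    set F := A.filter (fun a => (ν {a}).toReal ≤ (μ {a}).toReal) with hF
    have : ∀ a ∈ F, |(μ {a}).toReal - (ν {a}).toReal| = (μ {a}).toReal - (ν {a}).toReal := by
      intro a haF
      rw [abs_of_nonneg]
      have := (Finset.mem_filter.mp haF).2
      linarith
    rw [Finset.sum_congr rfl this, Finset.sum_sub_distrib, finset_meas μ, finset_meas ν]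
    exact le_trans (le_abs_self _) (hled _)
  have h2 : ∑ a ∈ A.filter (fun a => ¬ (ν {a}).toReal ≤ (μ {a}).toReal),
      |(μ {a}).toReal - (ν {a}).toReal| ≤ d := by
    set F := A.filter (fun a => ¬ (ν {a}).toReal ≤ (μ {a}).toReal) with hF
    have : ∀ a ∈ F, |(μ {a}).toReal - (ν {a}).toReal| = (ν {a}).toReal - (μ {a}).toReal := by
      intro a haF
      rw [abs_sub_comm, abs_of_nonneg]
      have := (Finset.mem_filter.mp haF).2
      linarith
    rw [Finset.sum_congr rfl this, Finset.sum_sub_distrib, finset_meas μ, finset_meas ν]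
    calc (ν ↑F).toReal - (μ ↑F).toReal ≤ |(ν ↑F).toReal - (μ ↑F).toReal| := le_abs_self _
      _ = |(μ ↑F).toReal - (ν ↑F).toReal| := abs_sub_comm _ _
      _ ≤ d := hled _
  linarith

/-- Lemma 5.2 (ii):
`|∑_{i=l+1}^n (θᵢ−θ) P[T+i=k]| ≤ δ(m,θ) + m(2θ*' + (1/6)θ_* m) d_TV(L(T),L(T+1))`. -/
theorem stmt6 {Ω : Type*} [MeasurableSpace Ω] (P : Measure Ω) [IsProbabilityMeasure P]
    (T : Ω → ℕ) (hT : Measurable T)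
    (θ : ℝ) (hθ : 0 < θ) (θi : ℕ → ℝ) (hnn : ∀ i, 0 ≤ θi i)
    (hbdd : BddAbove (Set.range fun i => θi (i + 1)))
    (k : ℕ) (l n m : ℕ) (hln : l < n) (hm : 1 ≤ m) :
    |∑ i ∈ Icc (l + 1) n, (θi i - θ) * (P {ω | T ω + i = k}).toReal| ≤
      (⨆ j : ℕ, |(1 / (m : ℝ)) * ∑ i ∈ Icc 1 m, θi (j * m + i) - θ|) +
        m * (2 * max θ (⨆ i, θi (i + 1)) + (1 / 6) * (⨆ i, θi (i + 1)) * m) *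
          dTV (Measure.map T P) (Measure.map (fun ω => T ω + 1) P) := by
  have hT1 : Measurable fun ω => T ω + 1 := hT.add_const 1
  set μ := Measure.map T P with hμdef
  set ν := Measure.map (fun ω => T ω + 1) P with hνdef
  have instμ : IsProbabilityMeasure μ := Measure.isProbabilityMeasure_map hT.aemeasurable
  have instν : IsProbabilityMeasure ν := Measure.isProbabilityMeasure_map hT1.aemeasurable
  set d := dTV μ ν with hddef
  -- basic bounds on dTV
  have htoReal1 : ∀ (ρ : Measure ℕ), IsProbabilityMeasure ρ → ∀ s : Set ℕ,
      (ρ s).toReal ≤ 1 := by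
    intro ρ hρ s
    have h1 : ρ s ≤ 1 := prob_le_one
    have := ENNReal.toReal_mono ENNReal.one_ne_top h1
    simpa using this
  have hbddTV : BddAbove (Set.range fun s : {s : Set ℕ // MeasurableSet s} =>
      |(μ s.1).toReal - (ν s.1).toReal|) := by
    refine ⟨2, ?_⟩
    rintro x ⟨s, rfl⟩
    have h1 := htoReal1 μ instμ s.1
    have h2 := htoReal1 ν instν s.1
    have h3 : (0:ℝ) ≤ (μ s.1).toReal := ENNReal.toReal_nonneg
    have h4 : (0:ℝ) ≤ (ν s.1).toReal := ENNReal.toReal_nonneg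
    rw [abs_le]
    exact ⟨by linarith, by linarith⟩
  have hled : ∀ s : Set ℕ, |(μ s).toReal - (ν s).toReal| ≤ d := by
    intro s
    exact le_ciSup hbddTV (⟨s, .of_discrete⟩ : {s : Set ℕ // MeasurableSet s})
  have hd0 : 0 ≤ d := by
    have := hled ∅
    simpa using this
  -- map formulas
  have hμs : ∀ s : Set ℕ, μ s = P (T ⁻¹' s) := fun s => Measure.map_apply hT .of_discrete
  have hνs : ∀ s : Set ℕ, ν s = P ((fun ω => T ω + 1) ⁻¹' s) :=
    fun s => Measure.map_apply hT1 .of_discrete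
  -- the point probabilities
  set p : ℕ → ℝ := fun i => (P {ω | T ω + i = k}).toReal with hpdef
  have hpkey : ∀ i, i ≤ k → ({ω | T ω + i = k} : Set Ω) = T ⁻¹' {k - i} := by
    intro i h
    ext ω
    simp only [Set.mem_setOf_eq, Set.mem_preimage, Set.mem_singleton_iff]
    omega
  have hpempty : ∀ i, k < i → ({ω | T ω + i = k} : Set Ω) = (∅ : Set Ω) := by
    intro i h
    ext ω
    simp only [Set.mem_setOf_eq, Set.mem_empty_iff_false, iff_false]
    omega
  have hpμ : ∀ i, i ≤ k → p i = (μ {k - i}).toReal := by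
    intro i h
    simp only [hpdef, hpkey i h, hμs]
  have hp0i : ∀ i, k < i → p i = 0 := by
    intro i h
    simp only [hpdef, hpempty i h, measure_empty, ENNReal.toReal_zero]
  have hνsing : ∀ a : ℕ, ν {a + 1} = μ {a} := by
    intro a
    rw [hμs, hνs]
    congr 1
    ext ω
    simp only [Set.mem_preimage, Set.mem_singleton_iff]
    omega
  have hν0 : ν {0} = 0 := by
    have he : ((fun ω => T ω + 1) ⁻¹' {0} : Set Ω) = ∅ := by
      ext ω; simp
    rw [hνs, he, measure_empty]
  -- p i ≤ d
  have hp0 : ∀ i, 0 ≤ p i := fun i => ENNReal.toReal_nonneg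
  have hpd : ∀ i, p i ≤ d := by
    intro i
    rcases le_or_gt i k with h | h
    · set j := k - i with hj
      have hsplit : P (T ⁻¹' Set.Iic j) = P (T ⁻¹' Set.Iio j) + P (T ⁻¹' {j}) := by
        rw [← measure_union ?_ (hT .of_discrete)]
        · congr 1
          ext ω
          simp only [Set.mem_preimage, Set.mem_Iic, Set.mem_union, Set.mem_Iio,
            Set.mem_singleton_iff]
          omega
        · rw [Set.disjoint_left]
          intro ω hω hω'
          simp only [Set.mem_preimage, Set.mem_Iio] at hω
          simp only [Set.mem_preimage, Set.mem_singleton_iff] at hω'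
          omega
      have hνIic : ν (Set.Iic j) = P (T ⁻¹' Set.Iio j) := by
        have hset : ((fun ω => T ω + 1) ⁻¹' Set.Iic j : Set Ω) = T ⁻¹' Set.Iio j := by
          ext ω
          simp only [Set.mem_preimage, Set.mem_Iic, Set.mem_Iio]
          omega
        rw [hνs, hset]
      have hμIic : μ (Set.Iic j) = P (T ⁻¹' Set.Iic j) := hμs _
      have hkey : p i = (μ (Set.Iic j)).toReal - (ν (Set.Iic j)).toReal := by
        rw [hpμ i h, hμs, hμIic, hνIic, hsplit,
          ENNReal.toReal_add (measure_ne_top _ _) (measure_ne_top _ _)]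
        ring
      rw [hkey]
      exact le_trans (le_abs_self _) (hled _)
    · rw [hp0i i h]; exact hd0
  -- sum of p over any finset is ≤ 1
  have hp1 : ∀ S : Finset ℕ, ∑ i ∈ S, p i ≤ 1 := by
    intro S
    have hmeas : ∀ i : ℕ, MeasurableSet {ω | T ω + i = k} := by
      intro i
      exact hT (.of_discrete : MeasurableSet {a : ℕ | a + i = k})
    have hdisj : (S : Set ℕ).PairwiseDisjoint (fun i => {ω | T ω + i = k}) := by
      intro i _ j _ hij
      rw [Function.onFun, Set.disjoint_left]
      intro ω hω hω'
      simp only [Set.mem_setOf_eq] at hω hω'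
      omega
    calc ∑ i ∈ S, p i = (∑ i ∈ S, P {ω | T ω + i = k}).toReal := by
          rw [ENNReal.toReal_sum fun i _ => measure_ne_top _ _]
      _ = (P (⋃ i ∈ S, {ω | T ω + i = k})).toReal := by
          rw [measure_biUnion_finset hdisj fun i _ => hmeas i]
      _ ≤ (P Set.univ).toReal := by
          apply ENNReal.toReal_mono (measure_ne_top _ _)
          exact measure_mono (Set.subset_univ _)
      _ = 1 := by simp
  -- variation bound
  have hvar : ∀ S : Finset ℕ, ∑ i ∈ S, |p (i+1) - p i| ≤ 2*d := by
    intro S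
    have hpt : ∀ i, i ≤ k → p (i+1) = (ν {k - i}).toReal := by
      intro i h
      rcases lt_or_eq_of_le h with h' | h'
      · have he : ν {k - i} = μ {k - (i+1)} := by
          rw [show k - i = (k - (i+1)) + 1 by omega]
          exact hνsing _
        rw [hpμ (i+1) (by omega), he]
      · rw [hp0i (i+1) (by omega), h']
        simp [hν0]
    have hz : ∀ i ∈ S.filter (fun i => ¬ i ≤ k), |p (i+1) - p i| = 0 := by
      intro i hi
      have := (Finset.mem_filter.mp hi).2
      rw [hp0i i (by omega), hp0i (i+1) (by omega)]
      simp
    rw [← Finset.sum_filter_add_sum_filter_not S (fun i => i ≤ k),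
      Finset.sum_congr rfl hz, Finset.sum_const, smul_zero, add_zero]
    have hcongr : ∀ i ∈ S.filter (fun i => i ≤ k),
        |p (i+1) - p i| = |(μ {k-i}).toReal - (ν {k-i}).toReal| := by
      intro i hi
      have hik := (Finset.mem_filter.mp hi).2
      rw [hpt i hik, hpμ i hik, abs_sub_comm]
    rw [Finset.sum_congr rfl hcongr]
    have himg : ∑ i ∈ S.filter (fun i => i ≤ k), |(μ {k-i}).toReal - (ν {k-i}).toReal|
        = ∑ a ∈ (S.filter (fun i => i ≤ k)).image (fun i => k - i),
            |(μ {a}).toReal - (ν {a}).toReal| := by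
      rw [Finset.sum_image]
      intro x hx y hy hxy
      have hxk := (Finset.mem_filter.mp hx).2
      have hyk := (Finset.mem_filter.mp hy).2
      simp only at hxy
      omega
    rw [himg]
    exact tv_claim μ ν d hled _
  -- θ-side facts
  have hθsi : ∀ i, 1 ≤ i → θi i ≤ ⨆ i, θi (i+1) := by
    intro i hi
    have := le_ciSup hbdd (i-1)
    simpa [Nat.sub_add_cancel hi] using this
  have hθs0 : (0:ℝ) ≤ ⨆ i, θi (i+1) := le_trans (hnn 1) (le_ciSup hbdd 0)
  have hbddδ : BddAbove (Set.range fun j : ℕ =>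
      |(1 / (m : ℝ)) * ∑ i ∈ Icc 1 m, θi (j * m + i) - θ|) := by
    refine ⟨(⨆ i, θi (i+1)) + θ, ?_⟩
    rintro x ⟨j, rfl⟩
    have havg0 : 0 ≤ (1 / (m : ℝ)) * ∑ i ∈ Icc 1 m, θi (j * m + i) := by
      apply mul_nonneg (by positivity)
      exact Finset.sum_nonneg fun t _ => hnn _
    have havgs : (1 / (m : ℝ)) * ∑ i ∈ Icc 1 m, θi (j * m + i) ≤ ⨆ i, θi (i+1) := by
      have hm' : (1:ℝ) ≤ (m:ℝ) := by exact_mod_cast hm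
      have h1 : ∑ i ∈ Icc 1 m, θi (j*m+i) ≤ ∑ i ∈ Icc 1 m, (⨆ i, θi (i+1)) := by
        apply Finset.sum_le_sum
        intro t ht
        exact hθsi _ (by simp [mem_Icc] at ht; omega)
      have h2 : ∑ i ∈ Icc 1 m, (⨆ i, θi (i+1)) = m * (⨆ i, θi (i+1)) := by
        rw [Finset.sum_const, Nat.card_Icc]; simp [nsmul_eq_mul]
      calc (1 / (m : ℝ)) * ∑ i ∈ Icc 1 m, θi (j * m + i)
          ≤ (1 / (m : ℝ)) * (m * (⨆ i, θi (i+1))) := by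
            apply mul_le_mul_of_nonneg_left _ (by positivity)
            rw [← h2]; exact h1
        _ = ⨆ i, θi (i+1) := by field_simp
    rw [abs_le]; constructor <;> linarith
  have hδj : ∀ j : ℕ, |(1 / (m : ℝ)) * ∑ i ∈ Icc 1 m, θi (j * m + i) - θ|
      ≤ ⨆ j : ℕ, |(1 / (m : ℝ)) * ∑ i ∈ Icc 1 m, θi (j * m + i) - θ| :=
    fun j => le_ciSup hbddδ j
  have hδ0 : (0:ℝ) ≤ ⨆ j : ℕ, |(1 / (m : ℝ)) * ∑ i ∈ Icc 1 m, θi (j * m + i) - θ| :=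
    le_trans (abs_nonneg _) (hδj 0)
  exact main_real p θi θ (⨆ i, θi (i+1)) (max θ (⨆ i, θi (i+1)))
    (⨆ j : ℕ, |(1 / (m : ℝ)) * ∑ i ∈ Icc 1 m, θi (j * m + i) - θ|) d m l n
    hm hln (le_max_right _ _) hθs0 hp0 hpd hp1 hvar hnn hθsi hδj hδ0 hd0
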